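/- Let 1 ≤ k ≤ n and define the cone 𝒫_k = {λ ∈ ℝⁿ : λ_{i_1} + ⋯ + λ_{i_k} > 0 for every choice of k distinct indices i_1 < ⋯ < i_k}, and P_k(λ) = ∏_{i_1 < ⋯ < i_k} (λ_{i_1} + ⋯ + λ_{i_k}). Then 𝒫_k is an open convex symmetric cone containing the positive cone Γ_n, and f = log P_k satisfies: ∂f/∂λ_i > 0 on 𝒫_k for all i, and f is concave on 𝒫_k. -/

import Mathlib

noncomputable section

/-- The cone `𝒫_k` of points all of whose `k`-fold partial sums are positive. -/
def Pcone (n k : ℕ) : Set (EuclideanSpace ℝ (Fin n)) :=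
  {x | ∀ s ∈ (Finset.univ : Finset (Fin n)).powersetCard k, 0 < ∑ i ∈ s, x i}

/-- `P_k(λ) = ∏_{i_1 < ⋯ < i_k} (λ_{i_1} + ⋯ + λ_{i_k})`. -/
def Pfun (n k : ℕ) (x : EuclideanSpace ℝ (Fin n)) : ℝ :=
  ∏ s ∈ (Finset.univ : Finset (Fin n)).powersetCard k, ∑ i ∈ s, x i

/-- The continuous linear functional `x ↦ ∑ i ∈ s, x i`. -/
def Lsum (n : ℕ) (s : Finset (Fin n)) : EuclideanSpace ℝ (Fin n) →L[ℝ] ℝ :=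
  LinearMap.toContinuousLinearMap
    { toFun := fun y => ∑ i ∈ s, y i
      map_add' := fun a b => by
        simpa using Finset.sum_add_distrib
      map_smul' := fun c a => by
        simpa using (Finset.mul_sum s (fun i => a i) c).symm }

lemma Lsum_apply (n : ℕ) (s : Finset (Fin n)) (y : EuclideanSpace ℝ (Fin n)) :
    Lsum n s y = ∑ i ∈ s, y i := rfl

lemma Pcone_isOpen (n k : ℕ) : IsOpen (Pcone n k) := by
  have : Pcone n k =
      ⋂ s ∈ (Finset.univ : Finset (Fin n)).powersetCard k, {x | 0 < Lsum n s x} := by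
    ext x; simp [Pcone, Lsum_apply, Set.mem_iInter]
  rw [this]
  refine isOpen_biInter_finset fun s _ => ?_
  exact isOpen_lt continuous_const (Lsum n s).continuous

lemma Pcone_convex (n k : ℕ) : Convex ℝ (Pcone n k) := by
  have : Pcone n k =
      ⋂ s ∈ (Finset.univ : Finset (Fin n)).powersetCard k, {x | 0 < Lsum n s x} := by
    ext x; simp [Pcone, Lsum_apply, Set.mem_iInter]
  rw [this]
  refine convex_iInter fun s => convex_iInter fun _ => ?_
  exact convex_halfSpace_gt (Lsum n s).toLinearMap.isLinear 0

lemma logPfun_eq (n k : ℕ) {x : EuclideanSpace ℝ (Fin n)} (hx : x ∈ Pcone n k) :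
    Real.log (Pfun n k x) =
      ∑ s ∈ (Finset.univ : Finset (Fin n)).powersetCard k, Real.log (∑ i ∈ s, x i) := by
  exact Real.log_prod fun s hs => (hx s hs).ne'


lemma concaveOn_log_Lsum (n k : ℕ) (s : Finset (Fin n))
    (hs : s ∈ (Finset.univ : Finset (Fin n)).powersetCard k) :
    ConcaveOn ℝ (Pcone n k) (fun y : EuclideanSpace ℝ (Fin n) => Real.log (∑ i ∈ s, y i)) := by
  have h := strictConcaveOn_log_Ioi.concaveOn.comp_affineMap
    (Lsum n s).toLinearMap.toAffineMap
  have h' : ConcaveOn ℝ ((Lsum n s).toLinearMap.toAffineMap ⁻¹' Set.Ioi 0)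
      (fun y : EuclideanSpace ℝ (Fin n) => Real.log (∑ i ∈ s, y i)) := h
  refine h'.subset (fun x hx => ?_) (Pcone_convex n k)
  exact hx s hs

lemma concaveOn_finset_sum {E : Type*} [AddCommGroup E] [Module ℝ E] {s : Set E}
    {ι : Type*} (t : Finset ι) (f : ι → E → ℝ)
    (h : ∀ i ∈ t, ConcaveOn ℝ s (f i)) (hconv : Convex ℝ s) :
    ConcaveOn ℝ s (fun x => ∑ i ∈ t, f i x) := by
  classical
  induction t using Finset.cons_induction with
  | empty => simpa using concaveOn_const (0:ℝ) hconv
  | cons a t ha ih =>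
    simp only [Finset.sum_cons]
    exact (h a (Finset.mem_cons_self a t)).add
      (ih fun i hi => h i (Finset.mem_cons_of_mem hi))

/-- `𝒫_k` is an open convex symmetric cone containing the positive
cone `Γ_n`, and `f = log P_k` has positive partial derivatives and is concave
on `𝒫_k`. -/
theorem Pcone_and_logPk_properties (n k : ℕ) (hk1 : 1 ≤ k) (hkn : k ≤ n) :
    IsOpen (Pcone n k) ∧
    Convex ℝ (Pcone n k) ∧
    (∀ (t : ℝ), 0 < t → ∀ x ∈ Pcone n k, t • x ∈ Pcone n k) ∧
    (∀ x ∈ Pcone n k, ∀ σ : Equiv.Perm (Fin n),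
      (WithLp.toLp 2 (fun i => x (σ i)) : EuclideanSpace ℝ (Fin n)) ∈ Pcone n k) ∧
    {x : EuclideanSpace ℝ (Fin n) | ∀ i, 0 < x i} ⊆ Pcone n k ∧
    (∀ x ∈ Pcone n k, ∀ i,
      0 < fderiv ℝ (fun y => Real.log (Pfun n k y)) x (EuclideanSpace.single i 1)) ∧
    ConcaveOn ℝ (Pcone n k) (fun y => Real.log (Pfun n k y)) := by
  refine ⟨Pcone_isOpen n k, Pcone_convex n k, ?_, ?_, ?_, ?_, ?_⟩
  · -- cone
    intro t ht x hx s hs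
    have := hx s hs
    have : (0:ℝ) < t * ∑ i ∈ s, x i := mul_pos ht this
    simpa [PiLp.smul_apply, smul_eq_mul, Finset.mul_sum] using this
  · -- symmetric
    intro x hx σ s hs
    rw [Finset.mem_powersetCard_univ] at hs
    have hs' : s.image σ ∈ (Finset.univ : Finset (Fin n)).powersetCard k := by
      rw [Finset.mem_powersetCard_univ, Finset.card_image_of_injective _ σ.injective, hs]
    have := hx _ hs'
    rwa [Finset.sum_image (fun i _ j _ h => σ.injective h)] at this
  · -- positive cone inclusion
    intro x hx s hs
    rw [Finset.mem_powersetCard_univ] at hs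
    have hne : s.Nonempty := Finset.card_pos.mp (hs ▸ hk1)
    exact Finset.sum_pos (fun i _ => hx i) hne
  · -- positive partial derivatives
    intro x hx i
    have hD : HasFDerivAt (fun y => Real.log (Pfun n k y))
        (∑ s ∈ (Finset.univ : Finset (Fin n)).powersetCard k,
          (∑ j ∈ s, x j)⁻¹ • Lsum n s) x := by
      have hF : HasFDerivAt
          (fun y : EuclideanSpace ℝ (Fin n) =>
            ∑ s ∈ (Finset.univ : Finset (Fin n)).powersetCard k, Real.log (∑ j ∈ s, y j))
          (∑ s ∈ (Finset.univ : Finset (Fin n)).powersetCard k,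
            (∑ j ∈ s, x j)⁻¹ • Lsum n s) x := by
        refine HasFDerivAt.fun_sum fun s hs => ?_
        have h1 : HasFDerivAt (fun y : EuclideanSpace ℝ (Fin n) => ∑ j ∈ s, y j)
            (Lsum n s) x := (Lsum n s).hasFDerivAt
        have h2 : HasDerivAt Real.log (∑ j ∈ s, x j)⁻¹ (∑ j ∈ s, x j) :=
          Real.hasDerivAt_log (hx s hs).ne'
        exact h2.comp_hasFDerivAt x h1
      refine hF.congr_of_eventuallyEq ?_
      filter_upwards [(Pcone_isOpen n k).mem_nhds hx] with y hy
      exact logPfun_eq n k hy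
    rw [hD.fderiv]
    have heval : ∀ s : Finset (Fin n),
        ((∑ j ∈ s, x j)⁻¹ • Lsum n s) (EuclideanSpace.single i 1)
          = (∑ j ∈ s, x j)⁻¹ * (if i ∈ s then 1 else 0) := by
      intro s
      simp only [ContinuousLinearMap.smul_apply, smul_eq_mul, Lsum_apply]
      congr 1
      simp [EuclideanSpace.single_apply, Finset.sum_ite_eq' s i (fun _ => (1:ℝ))]
    rw [ContinuousLinearMap.sum_apply]
    simp only [heval]
    obtain ⟨u, hiu, -, hcard⟩ := Finset.exists_subsuperset_card_eq
      (Finset.subset_univ {i}) (by simpa using hk1) (by simpa using hkn)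
    have hu : u ∈ (Finset.univ : Finset (Fin n)).powersetCard k :=
      Finset.mem_powersetCard_univ.mpr hcard
    refine Finset.sum_pos' (fun s hs => ?_) ⟨u, hu, ?_⟩
    · by_cases h : i ∈ s
      · simp only [h, if_true, mul_one]
        exact le_of_lt (inv_pos.mpr (hx s hs))
      · simp [h]
    · have : i ∈ u := hiu (Finset.mem_singleton_self i)
      simp only [this, if_true, mul_one]
      exact inv_pos.mpr (hx u hu)
  · -- concavity
    have hsum : ConcaveOn ℝ (Pcone n k)
        (fun y : EuclideanSpace ℝ (Fin n) =>
          ∑ s ∈ (Finset.univ : Finset (Fin n)).powersetCard k, Real.log (∑ i ∈ s, y i)) :=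
      concaveOn_finset_sum _ _ (fun s hs => concaveOn_log_Lsum n k s hs) (Pcone_convex n k)
    refine ⟨Pcone_convex n k, fun x hx y hy a b ha hb hab => ?_⟩
    have hxy : a • x + b • y ∈ Pcone n k := Pcone_convex n k hx hy ha hb hab
    dsimp only
    rw [logPfun_eq n k hxy, logPfun_eq n k hx, logPfun_eq n k hy]
    exact hsum.2 hx hy ha hb hab
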